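/- Let H be a complex Hilbert space and let C, D, M : H → H be bounded self-adjoint operators with D invertible (with continuous inverse), and suppose the kernel of C is the one-dimensional span of a nonzero vector φ' ∈ H. Then the Hilbert-space adjoint L† of the block operator L(p, q) = (D q, −C p − M q) on H × H is given by L†(p, q) = (−C q, D p − M q), and the kernel of L† is exactly {(c • D⁻¹ M φ', c • φ') : c ∈ ℂ}. -/

import Mathlib

open scoped InnerProductSpace

/-- Lemma 2.1 (adjoint kernel): for bounded self-adjoint `C, D, M` with `D` invertible
(with continuous inverse `Dinv`) and `ker C = span {φ'}`, `φ' ≠ 0`, the Hilbert-space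
adjoint of the block operator `L(p, q) = (D q, -C p - M q)` is
`L†(p, q) = (-C q, D p - M q)` (characterized by the inner-product identity on the
product Hilbert space, whose inner product is the sum of componentwise inner products),
and the kernel of `L†` is exactly `{(c • D⁻¹ M φ', c • φ') : c ∈ ℂ}`. -/
theorem adjoint_of_block_operator
    {H : Type*} [NormedAddCommGroup H] [InnerProductSpace ℂ H] [CompleteSpace H]
    (C D M Dinv : H →L[ℂ] H)
    (hC : IsSelfAdjoint C) (hD : IsSelfAdjoint D) (hM : IsSelfAdjoint M)
    (hD1 : D.comp Dinv = ContinuousLinearMap.id ℂ H)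
    (hD2 : Dinv.comp D = ContinuousLinearMap.id ℂ H)
    (φ' : H) (hφ' : φ' ≠ 0)
    (hker : LinearMap.ker (C : H →ₗ[ℂ] H) = Submodule.span ℂ {φ'}) :
    (∀ p q p' q' : H,
      ⟪D q, p'⟫_ℂ + ⟪-C p - M q, q'⟫_ℂ = ⟪p, -C q'⟫_ℂ + ⟪q, D p' - M q'⟫_ℂ) ∧
    {P : H × H | (-C P.2, D P.1 - M P.2) = (0, 0)} =
      {P : H × H | ∃ c : ℂ, P = (c • Dinv (M φ'), c • φ')} := by
  have hCs := hC.isSymmetric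
  have hDs := hD.isSymmetric
  have hMs := hM.isSymmetric
  constructor
  · intro p q p' q'
    have h1 := hDs q p'
    have h2 := hCs p q'
    have h3 := hMs q q'
    simp only [ContinuousLinearMap.coe_coe] at h1 h2 h3
    simp only [inner_sub_left, inner_sub_right, inner_neg_left, inner_neg_right,
      h1, h2, h3]
    ring
  · ext P
    obtain ⟨p, q⟩ := P
    simp only [Set.mem_setOf_eq, Prod.mk.injEq]
    constructor
    · rintro ⟨h1, h2⟩
      have hq : q ∈ LinearMap.ker (C : H →ₗ[ℂ] H) := by
        simpa [LinearMap.mem_ker] using neg_eq_zero.mp h1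
      rw [hker, Submodule.mem_span_singleton] at hq
      obtain ⟨c, hc⟩ := hq
      refine ⟨c, ?_⟩
      have hDp : D p = M q := sub_eq_zero.mp h2
      have hp : p = Dinv (M q) := by
        have := congrArg Dinv hDp
        rwa [← ContinuousLinearMap.comp_apply, hD2, ContinuousLinearMap.id_apply] at this
      refine ⟨?_, hc.symm⟩
      rw [hp, ← hc]
      simp
    · rintro ⟨c, hc⟩
      obtain ⟨hp, hq⟩ := hc
      have hφk : C φ' = 0 := by
        have : φ' ∈ LinearMap.ker (C : H →ₗ[ℂ] H) := by
          rw [hker]; exact Submodule.mem_span_singleton_self _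
        simpa using this
      constructor
      · rw [hq]; simp [hφk]
      · rw [hp, hq]
        have hid : D (Dinv (M φ')) = M φ' := by
          rw [← ContinuousLinearMap.comp_apply, hD1]; rfl
        rw [map_smul, hid, map_smul, sub_self]
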